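/- Let g, γ, w, Γ₋ be invertible matrix Laurent series with Γ₋ = w⁻¹g and J = g⁻¹γ, where g has only nonnegative powers of z. Then Res_z Tr(Γ₋⁻¹ (∂_z Γ₋) · (∂_t J) J⁻¹) = Res_z Tr((∂_z w) w⁻¹ (∂_t g) g⁻¹), i.e. the Jimbo–Miwa–Ueno logarithmic derivative formula (2.23) equals the Baker-function formula (2.24). -/

import Mathlib

open LaurentPolynomial

/-- Formal `z`-derivative of a Laurent polynomial. -/
noncomputable def lderiv {S : Type*} [CommRing S] (p : LaurentPolynomial S) :
    LaurentPolynomial S :=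
  p.coeff.sum fun k a => LaurentPolynomial.C (k • a) * LaurentPolynomial.T (k - 1)

/-- Coefficientwise extension of a `t`-derivation `dt` on the coefficient ring
to Laurent polynomials in `z`. -/
noncomputable def tderiv {S : Type*} [CommRing S] (dt : S → S)
    (p : LaurentPolynomial S) : LaurentPolynomial S :=
  p.coeff.sum fun k a => LaurentPolynomial.C (dt a) * LaurentPolynomial.T k

section auxderiv
variable {S : Type*} [CommRing S] {n : ℕ}

lemma single_mul_single' (k l : ℤ) (a b : S) :
    (C a * T k) * (C b * T l) = C (a * b) * T (k + l) := by
  rw [← single_eq_C_mul_T, ← single_eq_C_mul_T, ← single_eq_C_mul_T,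
    AddMonoidAlgebra.single_mul_single]

lemma lderiv_single (k : ℤ) (a : S) :
    lderiv (C a * T k) = C (k • a) * T (k - 1) := by
  rw [lderiv, ← single_eq_C_mul_T, AddMonoidAlgebra.coeff_single, Finsupp.sum_single_index]
  simp

lemma tderiv_single (dt : S → S) (h0 : dt 0 = 0) (k : ℤ) (a : S) :
    tderiv dt (C a * T k) = C (dt a) * T k := by
  rw [tderiv, ← single_eq_C_mul_T, AddMonoidAlgebra.coeff_single, Finsupp.sum_single_index]
  simp [h0]

lemma lderiv_add (p q : LaurentPolynomial S) :
    lderiv (p + q) = lderiv p + lderiv q := by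
  unfold lderiv
  rw [AddMonoidAlgebra.coeff_add]
  refine Finsupp.sum_add_index' (fun k => by simp) (fun k b₁ b₂ => ?_)
  rw [smul_add, map_add, add_mul]

lemma tderiv_add (dt : S → S) (hdt_add : ∀ a b : S, dt (a + b) = dt a + dt b)
    (p q : LaurentPolynomial S) :
    tderiv dt (p + q) = tderiv dt p + tderiv dt q := by
  have h0 : dt 0 = 0 := by
    have := hdt_add 0 0
    simpa using this.symm
  unfold tderiv
  rw [AddMonoidAlgebra.coeff_add]
  refine Finsupp.sum_add_index' (fun k => by simp [h0]) (fun k b₁ b₂ => ?_)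
  rw [hdt_add, map_add, add_mul]

lemma lderiv_mul (p q : LaurentPolynomial S) :
    lderiv (p * q) = lderiv p * q + p * lderiv q := by
  induction p using LaurentPolynomial.induction_on' with
  | add p₁ p₂ h1 h2 =>
    rw [add_mul, lderiv_add, h1, h2, lderiv_add, add_mul, add_mul]
    ring
  | C_mul_T k a =>
    induction q using LaurentPolynomial.induction_on' with
    | add q₁ q₂ h1 h2 =>
      rw [mul_add, lderiv_add, h1, h2, lderiv_add, mul_add, mul_add]
      ring
    | C_mul_T l b =>
      rw [single_mul_single', lderiv_single, lderiv_single, lderiv_single,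
        single_mul_single', single_mul_single']
      rw [show k - 1 + l = k + l - 1 by ring, show k + (l - 1) = k + l - 1 by ring,
        ← add_mul, ← map_add]
      congr 2
      rw [add_smul, smul_mul_assoc, mul_smul_comm]

lemma tderiv_mul (dt : S → S) (hdt_add : ∀ a b : S, dt (a + b) = dt a + dt b)
    (hdt_mul : ∀ a b : S, dt (a * b) = dt a * b + a * dt b)
    (p q : LaurentPolynomial S) :
    tderiv dt (p * q) = tderiv dt p * q + p * tderiv dt q := by
  have h0 : dt 0 = 0 := by
    have := hdt_add 0 0
    simpa using this.symm
  induction p using LaurentPolynomial.induction_on' with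
  | add p₁ p₂ h1 h2 =>
    rw [add_mul, tderiv_add dt hdt_add, h1, h2, tderiv_add dt hdt_add, add_mul, add_mul]
    ring
  | C_mul_T k a =>
    induction q using LaurentPolynomial.induction_on' with
    | add q₁ q₂ h1 h2 =>
      rw [mul_add, tderiv_add dt hdt_add, h1, h2, tderiv_add dt hdt_add, mul_add, mul_add]
      ring
    | C_mul_T l b =>
      rw [single_mul_single', tderiv_single dt h0, tderiv_single dt h0, tderiv_single dt h0,
        single_mul_single', single_mul_single', ← add_mul, ← map_add, hdt_mul]

variable {f : LaurentPolynomial S → LaurentPolynomial S}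

lemma f_zero (f_add : ∀ p q, f (p + q) = f p + f q) : f 0 = 0 := by
  have := f_add 0 0
  simpa using this.symm

lemma f_one (f_mul : ∀ p q, f (p * q) = f p * q + p * f q) : f 1 = 0 := by
  have := f_mul 1 1
  simp only [mul_one, one_mul] at this
  exact left_eq_add.mp this

lemma matmap_mul (f_add : ∀ p q, f (p + q) = f p + f q)
    (f_mul : ∀ p q, f (p * q) = f p * q + p * f q)
    (A B : Matrix (Fin n) (Fin n) (LaurentPolynomial S)) :
    (A * B).map f = A.map f * B + A * B.map f := by
  apply Matrix.ext; intro i j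
  simp only [Matrix.map_apply, Matrix.mul_apply, Matrix.add_apply]
  rw [show f (∑ k, A i k * B k j) = ∑ k, f (A i k * B k j) from
    map_sum (AddMonoidHom.mk' f f_add) _ _, ← Finset.sum_add_distrib]
  exact Finset.sum_congr rfl fun k _ => f_mul _ _

lemma matmap_one (f_add : ∀ p q, f (p + q) = f p + f q)
    (f_mul : ∀ p q, f (p * q) = f p * q + p * f q) :
    ((1 : Matrix (Fin n) (Fin n) (LaurentPolynomial S))).map f = 0 := by
  apply Matrix.ext; intro i j
  simp only [Matrix.map_apply, Matrix.one_apply, Matrix.zero_apply]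
  split_ifs
  · exact f_one f_mul
  · exact f_zero f_add

lemma matmap_inverse (f_add : ∀ p q, f (p + q) = f p + f q)
    (f_mul : ∀ p q, f (p * q) = f p * q + p * f q)
    (A : Matrix (Fin n) (Fin n) (LaurentPolynomial S)) (hA : IsUnit A) :
    (Ring.inverse A).map f = -(Ring.inverse A * A.map f * Ring.inverse A) := by
  have h1 : A * Ring.inverse A = 1 := Ring.mul_inverse_cancel A hA
  have h2 : Ring.inverse A * A = 1 := Ring.inverse_mul_cancel A hA
  have h3 : A.map f * Ring.inverse A + A * (Ring.inverse A).map f = 0 := by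
    rw [← matmap_mul f_add f_mul, h1, matmap_one f_add f_mul]
  have h4 := congrArg (fun X => Ring.inverse A * X) h3
  simp only [mul_add, ← mul_assoc, h2, one_mul, mul_zero] at h4
  exact eq_neg_of_add_eq_zero_right h4

lemma ring_inverse_eq {R : Type*} [Ring R] {a b : R} (h1 : a * b = 1) (h2 : b * a = 1) :
    Ring.inverse a = b := by
  have ha : IsUnit a := ⟨⟨a, b, h1, h2⟩, rfl⟩
  calc Ring.inverse a = Ring.inverse a * (a * b) := by rw [h1, mul_one]
    _ = (Ring.inverse a * a) * b := by rw [mul_assoc]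
    _ = b := by rw [Ring.inverse_mul_cancel a ha, one_mul]

def Pos (p : LaurentPolynomial S) : Prop := ∀ k : ℤ, k < 0 → p.coeff k = 0

lemma Pos_mul {p q : LaurentPolynomial S} (hp : Pos p) (hq : Pos q) : Pos (p * q) := by
  intro x hx
  rw [AddMonoidAlgebra.mul_apply]
  rw [Finsupp.sum]
  apply Finset.sum_eq_zero
  intro a _
  rw [Finsupp.sum]
  apply Finset.sum_eq_zero
  intro b _
  split_ifs with h
  · rcases lt_or_ge a 0 with h1 | h1
    · rw [hp a h1, zero_mul]
    · have h2 : b < 0 := by omega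
      rw [hq b h2, mul_zero]
  · rfl

lemma Pos_sum {ι : Type*} (s : Finset ι) (F : ι → LaurentPolynomial S)
    (h : ∀ i ∈ s, Pos (F i)) : Pos (∑ i ∈ s, F i) := by
  intro k hk
  rw [AddMonoidAlgebra.coeff_sum, Finsupp.finset_sum_apply]
  exact Finset.sum_eq_zero fun i hi => h i hi k hk

lemma Pos_lderiv {p : LaurentPolynomial S} (hp : Pos p) : Pos (lderiv p) := by
  intro m hm
  rw [lderiv, Finsupp.sum, AddMonoidAlgebra.coeff_sum, Finsupp.finset_sum_apply]
  apply Finset.sum_eq_zero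
  intro k hk
  have hk0 : ¬ k < 0 := fun h => Finsupp.mem_support_iff.mp hk (hp k h)
  rw [← single_eq_C_mul_T, AddMonoidAlgebra.coeff_single, Finsupp.single_apply]
  split_ifs with h
  · have : k = 0 := by omega
    subst this
    simp
  · rfl

lemma Pos_tderiv (dt : S → S) {p : LaurentPolynomial S} (hp : Pos p) :
    Pos (tderiv dt p) := by
  intro m hm
  rw [tderiv, Finsupp.sum, AddMonoidAlgebra.coeff_sum, Finsupp.finset_sum_apply]
  apply Finset.sum_eq_zero
  intro k hk
  have hk0 : ¬ k < 0 := fun h => Finsupp.mem_support_iff.mp hk (hp k h)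
  rw [← single_eq_C_mul_T, AddMonoidAlgebra.coeff_single, Finsupp.single_apply]
  rw [if_neg (by omega)]

def PosM (A : Matrix (Fin n) (Fin n) (LaurentPolynomial S)) : Prop :=
  ∀ i j, Pos (A i j)

lemma PosM_mul {A B : Matrix (Fin n) (Fin n) (LaurentPolynomial S)}
    (hA : PosM A) (hB : PosM B) : PosM (A * B) := by
  intro i j
  rw [Matrix.mul_apply]
  exact Pos_sum _ _ fun k _ => Pos_mul (hA i k) (hB k j)

lemma PosM_trace_res {A : Matrix (Fin n) (Fin n) (LaurentPolynomial S)}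
    (hA : PosM A) : (Matrix.trace A).coeff (-1) = 0 := by
  have : Pos (Matrix.trace A) := by
    rw [Matrix.trace]
    exact Pos_sum _ _ fun i _ => hA i i
  exact this (-1) (by norm_num)

end auxderiv

/-- Corollary 2.10 of Cafasso–Wu: with `Γ₋ = w⁻¹g`, `J = g⁻¹γ`, `g` having
only nonnegative powers of `z` (as does its inverse) and `γ` independent of
`t`, the Jimbo–Miwa–Ueno logarithmic derivative equals the Baker-function
formula:
`Res_z Tr(Γ₋⁻¹ (∂_z Γ₋)(∂_t J)J⁻¹) = Res_z Tr((∂_z w) w⁻¹ (∂_t g) g⁻¹)`. -/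
theorem JMU_equals_baker_formula {S : Type*} [CommRing S] {n : ℕ}
    (dt : S → S)
    (hdt_add : ∀ a b : S, dt (a + b) = dt a + dt b)
    (hdt_mul : ∀ a b : S, dt (a * b) = dt a * b + a * dt b)
    (g γ w : Matrix (Fin n) (Fin n) (LaurentPolynomial S))
    (hg : IsUnit g) (hγ : IsUnit γ) (hw : IsUnit w)
    -- `g` and `g⁻¹` have only nonnegative powers of `z`
    (hgpos : ∀ (i j : Fin n) (k : ℤ), k < 0 → (g i j).coeff k = 0)
    (hginvpos : ∀ (i j : Fin n) (k : ℤ), k < 0 → ((Ring.inverse g) i j).coeff k = 0)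
    -- `γ` is independent of `t`
    (hγt : γ.map (tderiv dt) = 0) :
    (Matrix.trace
      (Ring.inverse (Ring.inverse w * g) * (Ring.inverse w * g).map lderiv *
        (Ring.inverse g * γ).map (tderiv dt) * Ring.inverse (Ring.inverse g * γ))).coeff
        (-1)
      = (Matrix.trace
          (w.map lderiv * Ring.inverse w * g.map (tderiv dt) * Ring.inverse g)).coeff
          (-1) := by
  set gi := Ring.inverse g with hgi_def
  set wi := Ring.inverse w with hwi_def
  set γi := Ring.inverse γ with hγi_def
  have ld_add : ∀ p q : LaurentPolynomial S, lderiv (p + q) = lderiv p + lderiv q :=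
    lderiv_add
  have ld_mul : ∀ p q : LaurentPolynomial S, lderiv (p * q) = lderiv p * q + p * lderiv q :=
    lderiv_mul
  have td_add : ∀ p q : LaurentPolynomial S,
      tderiv dt (p + q) = tderiv dt p + tderiv dt q := tderiv_add dt hdt_add
  have td_mul : ∀ p q : LaurentPolynomial S,
      tderiv dt (p * q) = tderiv dt p * q + p * tderiv dt q := tderiv_mul dt hdt_add hdt_mul
  have hggi : g * gi = 1 := Ring.mul_inverse_cancel g hg
  have hgig : gi * g = 1 := Ring.inverse_mul_cancel g hg
  have hwwi : w * wi = 1 := Ring.mul_inverse_cancel w hw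
  have hwiw : wi * w = 1 := Ring.inverse_mul_cancel w hw
  have hγγi : γ * γi = 1 := Ring.mul_inverse_cancel γ hγ
  have hγiγ : γi * γ = 1 := Ring.inverse_mul_cancel γ hγ
  -- inverses of products
  have hinv1 : Ring.inverse (wi * g) = gi * w := by
    apply ring_inverse_eq
    · rw [mul_assoc, ← mul_assoc g gi w, hggi, one_mul, hwiw]
    · rw [mul_assoc, ← mul_assoc w wi g, hwwi, one_mul, hgig]
  have hinv2 : Ring.inverse (gi * γ) = γi * g := by
    apply ring_inverse_eq
    · rw [mul_assoc, ← mul_assoc γ γi g, hγγi, one_mul, hgig]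
    · rw [mul_assoc, ← mul_assoc g gi γ, hggi, one_mul, hγiγ]
  -- derivatives
  have hΓd : (wi * g).map lderiv = wi.map lderiv * g + wi * g.map lderiv :=
    matmap_mul ld_add ld_mul wi g
  have hwid : wi.map lderiv = -(wi * w.map lderiv * wi) :=
    matmap_inverse ld_add ld_mul w hw
  have hgid : gi.map (tderiv dt) = -(gi * g.map (tderiv dt) * gi) :=
    matmap_inverse td_add td_mul g hg
  have hJd : (gi * γ).map (tderiv dt) = gi.map (tderiv dt) * γ := by
    rw [matmap_mul td_add td_mul gi γ, hγt, mul_zero, add_zero]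
  -- cancellation helpers
  have c1 : ∀ X : Matrix (Fin n) (Fin n) (LaurentPolynomial S), g * (gi * X) = X :=
    fun X => by rw [← mul_assoc, hggi, one_mul]
  have c2 : ∀ X : Matrix (Fin n) (Fin n) (LaurentPolynomial S), gi * (g * X) = X :=
    fun X => by rw [← mul_assoc, hgig, one_mul]
  have c3 : ∀ X : Matrix (Fin n) (Fin n) (LaurentPolynomial S), w * (wi * X) = X :=
    fun X => by rw [← mul_assoc, hwwi, one_mul]
  have c4 : ∀ X : Matrix (Fin n) (Fin n) (LaurentPolynomial S), wi * (w * X) = X :=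
    fun X => by rw [← mul_assoc, hwiw, one_mul]
  have c5 : ∀ X : Matrix (Fin n) (Fin n) (LaurentPolynomial S), γ * (γi * X) = X :=
    fun X => by rw [← mul_assoc, hγγi, one_mul]
  have c6 : ∀ X : Matrix (Fin n) (Fin n) (LaurentPolynomial S), γi * (γ * X) = X :=
    fun X => by rw [← mul_assoc, hγiγ, one_mul]
  -- the key matrix identity
  have key : Ring.inverse (wi * g) * (wi * g).map lderiv *
      (gi * γ).map (tderiv dt) * Ring.inverse (gi * γ)
      = gi * (w.map lderiv * (wi * g.map (tderiv dt)))
        - gi * (g.map lderiv * (gi * g.map (tderiv dt))) := by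
    rw [hinv1, hinv2, hΓd, hwid, hJd, hgid]
    simp only [mul_add, add_mul, mul_neg, neg_mul, neg_neg, mul_assoc,
      c1, c2, c3, c4, c5, c6, hgig, hggi, hwiw, hwwi, hγiγ, hγγi, mul_one, one_mul,
      sub_eq_add_neg]
    abel
  rw [key, Matrix.trace_sub]
  have hres0 : (Matrix.trace (gi * (g.map lderiv * (gi * g.map (tderiv dt))))).coeff (-1) = 0 := by
    rw [Matrix.trace_mul_comm]
    apply PosM_trace_res
    have hPg : PosM g := fun i j => hgpos i j
    have hPgi : PosM gi := fun i j => hginvpos i j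
    exact PosM_mul (PosM_mul (fun i j => Pos_lderiv (hPg i j))
      (PosM_mul hPgi (fun i j => Pos_tderiv dt (hPg i j)))) hPgi
  have htr : Matrix.trace (gi * (w.map lderiv * (wi * g.map (tderiv dt))))
      = Matrix.trace (w.map lderiv * wi * g.map (tderiv dt) * gi) := by
    rw [Matrix.trace_mul_comm]
    refine congrArg Matrix.trace ?_
    simp only [mul_assoc]
  rw [AddMonoidAlgebra.coeff_sub, Finsupp.sub_apply, hres0, sub_zero, htr]
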